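/- Let n ≥ 2 and l_1,...,l_n be positive integers with l = l_1 + ... + l_n ≥ 5. With a_k defined as a_k = 2^(binom(l-k,2)) · Σ_{(j_i)} binom(l-k; j_1,...,j_n) · ∏_i binom(l_i+2, j_i+2) (sum over 0 ≤ j_i ≤ l_i with Σ j_i = l-k), we have Σ_{k=1}^l a_k < ((e^2 - 1)/2) · 2^(binom(l,2)) · binom(l; l_1,...,l_n). -/

import Mathlib

open Finset Nat

lemma fact_le_pow_mul_fact (j d : ℕ) : (j + d)! ≤ (j + d)^d * j ! := by
  induction d with
  | zero => simp
  | succ d ih =>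
    have h1 : (j + (d+1))! = (j + d + 1) * (j + d)! := by
      rw [show j + (d+1) = (j+d)+1 by ring, Nat.factorial_succ]
    rw [h1]
    calc (j + d + 1) * (j + d)! ≤ (j + d + 1) * ((j + d)^d * j !) :=
          Nat.mul_le_mul_left _ ih
      _ ≤ (j + d + 1) * ((j + d + 1)^d * j !) := by
          exact Nat.mul_le_mul_left _ (Nat.mul_le_mul_right _ (Nat.pow_le_pow_left (by omega) d))
      _ = (j + (d+1))^(d+1) * j ! := by ring_nf

lemma per_i (L j : ℕ) (h : j ≤ L) :
    Nat.choose (L+2) (j+2) * (L - j)! * L ! ≤ (L*(L+2))^(L-j) * j ! := by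
  obtain ⟨d, rfl⟩ : ∃ d, L = j + d := ⟨L - j, by omega⟩
  rw [show j + d - j = d by omega]
  have hc : Nat.choose (j+d+2) (j+2) * (j+2)! * d ! = (j+d+2)! := by
    have := Nat.choose_mul_factorial_mul_factorial (show j+2 ≤ j+d+2 by omega)
    rwa [show j+d+2-(j+2) = d by omega] at this
  apply Nat.le_of_mul_le_mul_right _ (Nat.factorial_pos (j+2))
  calc Nat.choose (j+d+2) (j+2) * d ! * (j+d)! * (j+2)!
      = (Nat.choose (j+d+2) (j+2) * (j+2)! * d !) * (j+d)! := by ring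
    _ = (j+d+2)! * (j+d)! := by rw [hc]
    _ = ((j+2)+d)! * (j+d)! := by ring_nf
    _ ≤ (((j+2)+d)^d * (j+2)!) * ((j+d)^d * j !) :=
        Nat.mul_le_mul (fact_le_pow_mul_fact (j+2) d) (fact_le_pow_mul_fact j d)
    _ = ((j+d)*(j+d+2))^d * j ! * (j+2)! := by
        rw [show (j+d)*(j+d+2) = ((j+2)+d)*(j+d) by ring, Nat.mul_pow]; ring

lemma adt_eq_piAntidiag (n k : ℕ) :
    Finset.Nat.antidiagonalTuple n k = Finset.piAntidiag Finset.univ k := by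
  ext f
  simp [Finset.Nat.mem_antidiagonalTuple, Finset.mem_piAntidiag]

lemma sum_pow_adt (n k : ℕ) (x : Fin n → ℝ) :
    (∑ i, x i) ^ k = ∑ d ∈ Finset.Nat.antidiagonalTuple n k,
      (Nat.multinomial Finset.univ d : ℝ) * ∏ i, x i ^ d i := by
  rw [adt_eq_piAntidiag]
  exact Finset.sum_pow_eq_sum_piAntidiag Finset.univ x k

lemma sum_prod_div_fact (n k : ℕ) (x : Fin n → ℝ) (hx : ∀ i, 0 ≤ x i) :
    ∑ d ∈ Finset.Nat.antidiagonalTuple n k, ∏ i, x i ^ d i / (d i)! 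
      = (∑ i, x i) ^ k / k ! := by
  rw [eq_div_iff (by positivity : ((k ! : ℝ)) ≠ 0), sum_pow_adt n k x, Finset.sum_mul]
  apply Finset.sum_congr rfl
  intro d hd
  have hsum : ∑ i, d i = k := (Finset.Nat.mem_antidiagonalTuple).1 hd
  have hspec : ((∏ i, (d i)! : ℕ) : ℝ) * (Nat.multinomial Finset.univ d : ℝ) = (k ! : ℝ) := by
    rw [← Nat.cast_mul, Nat.multinomial_spec, hsum]
  have hpos : ((∏ i, (d i)! : ℕ) : ℝ) ≠ 0 := by positivity
  rw [Finset.prod_div_distrib]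
  push_cast at hpos hspec ⊢
  rw [div_mul_eq_mul_div, div_eq_iff hpos, ← hspec]
  ring

lemma per_term (n l k : ℕ) (L j : Fin n → ℕ) (hsum : ∑ i, L i = l)
    (hjsum : ∑ i, j i = l - k) (hle : ∀ i, j i ≤ L i) :
    Nat.multinomial Finset.univ j * (∏ i, Nat.choose (L i + 2) (j i + 2)) *
      (l ! * ∏ i, (L i - j i)!)
    ≤ Nat.multinomial Finset.univ L * ((l-k)! * ∏ i, (L i * (L i + 2))^(L i - j i)) := by
  set c : ℕ := (∏ i, (j i)!) * (∏ i, (L i)!) with hc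
  have hcpos : 0 < c := by positivity
  apply Nat.le_of_mul_le_mul_left _ hcpos
  have key1 : (∏ i, (j i)!) * Nat.multinomial Finset.univ j = (l - k)! := by
    rw [Nat.multinomial_spec, hjsum]
  have key2 : (∏ i, (L i)!) * Nat.multinomial Finset.univ L = l ! := by
    rw [Nat.multinomial_spec, hsum]
  have hprod : ∏ i, (Nat.choose (L i + 2) (j i + 2) * (L i - j i)! * (L i)!)
      ≤ ∏ i, ((L i * (L i + 2))^(L i - j i) * (j i)!) :=
    Finset.prod_le_prod' fun i _ => per_i (L i) (j i) (hle i)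
  calc c * (Nat.multinomial Finset.univ j * (∏ i, Nat.choose (L i + 2) (j i + 2)) *
        (l ! * ∏ i, (L i - j i)!))
      = ((∏ i, (j i)!) * Nat.multinomial Finset.univ j) * l ! *
        (∏ i, (Nat.choose (L i + 2) (j i + 2) * (L i - j i)! * (L i)!)) := by
        simp only [Finset.prod_mul_distrib]; ring
    _ = (l-k)! * l ! * (∏ i, (Nat.choose (L i + 2) (j i + 2) * (L i - j i)! * (L i)!)) := by
        rw [key1]
    _ ≤ (l-k)! * l ! * (∏ i, ((L i * (L i + 2))^(L i - j i) * (j i)!)) :=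
        Nat.mul_le_mul_left _ hprod
    _ = c * (Nat.multinomial Finset.univ L * ((l-k)! * ∏ i, (L i * (L i + 2))^(L i - j i))) := by
        rw [← key2]; simp only [Finset.prod_mul_distrib]; ring

noncomputable def F (l k : ℕ) : ℝ :=
  2^(Nat.choose (l-k) 2) * (((l-k)! : ℝ) * ((l:ℝ) * ((l:ℝ)+1))^k) / ((l ! : ℝ) * (k ! : ℝ))

lemma per_k (n l k : ℕ) (hn : 2 ≤ n) (L : Fin n → ℕ) (hL : ∀ i, 0 < L i)
    (hsum : ∑ i, L i = l) (hk : k ≤ l) :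
    ((2 ^ (Nat.choose (l - k) 2) *
      ∑ j ∈ (Finset.Nat.antidiagonalTuple n (l - k)).filter (fun j => ∀ i, j i ≤ L i),
        Nat.multinomial Finset.univ j * ∏ i, Nat.choose (L i + 2) (j i + 2) : ℕ) : ℝ)
    ≤ (Nat.multinomial Finset.univ L : ℝ) * F l k := by
  have hLi : ∀ i, L i + 1 ≤ l := by
    intro i
    obtain ⟨i', -, hne⟩ := Finset.exists_mem_ne
      (by rw [Finset.card_univ, Fintype.card_fin]; omega) i
    have h2 : ∑ t ∈ ({i, i'} : Finset (Fin n)), L t ≤ ∑ t, L t :=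
      Finset.sum_le_sum_of_subset (Finset.subset_univ _)
    rw [Finset.sum_pair (Ne.symm hne)] at h2
    have := hL i'
    omega
  set x : Fin n → ℝ := fun i => (L i : ℝ) * ((L i : ℝ) + 2) with hx
  have hxnn : ∀ i, 0 ≤ x i := fun i => by positivity
  have hXr : ∑ i, x i ≤ (l:ℝ) * ((l:ℝ)+1) := by
    have hXn : ∑ i, L i * (L i + 2) ≤ l * (l+1) := by
      calc ∑ i, L i * (L i + 2) ≤ ∑ i, L i * (l + 1) := by
            apply Finset.sum_le_sum; intro i _
            exact Nat.mul_le_mul_left _ (by have := hLi i; omega)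
        _ = l * (l+1) := by rw [← Finset.sum_mul, hsum]
    calc ∑ i, x i = ((∑ i, L i * (L i + 2) : ℕ) : ℝ) := by
          push_cast [hx]; exact Finset.sum_congr rfl fun i _ => by ring
      _ ≤ ((l * (l+1) : ℕ) : ℝ) := by exact_mod_cast hXn
      _ = (l:ℝ) * ((l:ℝ)+1) := by push_cast; ring
  set Fl := (Finset.Nat.antidiagonalTuple n (l - k)).filter (fun j => ∀ i, j i ≤ L i) with hFl
  have hterm : ∀ j ∈ Fl, ((Nat.multinomial Finset.univ j *
        ∏ i, Nat.choose (L i + 2) (j i + 2) : ℕ) : ℝ)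
      ≤ (Nat.multinomial Finset.univ L : ℝ) * (((l-k)! : ℝ) / (l ! : ℝ)) *
        ∏ i, x i ^ (L i - j i) / ((L i - j i)! : ℝ) := by
    intro j hj
    rw [hFl, Finset.mem_filter, Finset.Nat.mem_antidiagonalTuple] at hj
    obtain ⟨hjsum, hle⟩ := hj
    have hN := per_term n l k L j hsum hjsum hle
    have hden : (0:ℝ) < (l ! : ℝ) * ∏ i, ((L i - j i)! : ℝ) := by positivity
    have hstep : ((Nat.multinomial Finset.univ j *
        ∏ i, Nat.choose (L i + 2) (j i + 2) : ℕ) : ℝ)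
        ≤ ((Nat.multinomial Finset.univ L : ℝ) *
            (((l-k)! : ℝ) * ∏ i, x i ^ (L i - j i))) /
          ((l ! : ℝ) * ∏ i, ((L i - j i)! : ℝ)) := by
      rw [le_div_iff₀ hden]
      have := hN
      have hcast : ((Nat.multinomial Finset.univ j *
          (∏ i, Nat.choose (L i + 2) (j i + 2)) * (l ! * ∏ i, (L i - j i)!) : ℕ) : ℝ)
          ≤ ((Nat.multinomial Finset.univ L *
              ((l-k)! * ∏ i, (L i * (L i + 2))^(L i - j i)) : ℕ) : ℝ) := by
        exact_mod_cast hN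
      push_cast at hcast ⊢
      calc (↑(Nat.multinomial Finset.univ j) * ∏ i, (↑((L i + 2).choose (j i + 2)) : ℝ)) *
            (↑l ! * ∏ i, (↑(L i - j i)! : ℝ))
          ≤ ↑(Nat.multinomial Finset.univ L) *
              (↑(l - k)! * ∏ i, ((L i : ℝ) * ((L i : ℝ) + 2)) ^ (L i - j i)) := hcast
        _ = ↑(Nat.multinomial Finset.univ L) * (↑(l - k)! * ∏ i, x i ^ (L i - j i)) := by
            simp [hx]
    refine hstep.trans_eq ?_
    have hP : (∏ i, ((L i - j i)! : ℝ)) ≠ 0 := by positivity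
    have hl0 : ((l ! : ℕ) : ℝ) ≠ 0 := by positivity
    rw [Finset.prod_div_distrib]
    field_simp
  -- now sum over Fl
  set D : (Fin n → ℕ) → (Fin n → ℕ) := fun j i => L i - j i with hD
  set g : (Fin n → ℕ) → ℝ := fun d => ∏ i, x i ^ d i / ((d i)! : ℝ) with hg
  have hgnn : ∀ d, 0 ≤ g d := fun d => by
    rw [hg]; exact Finset.prod_nonneg fun i _ => by positivity
  have hsum_g : ∑ j ∈ Fl, g (D j) ≤ ((l:ℝ) * ((l:ℝ)+1))^k / (k ! : ℝ) := by
    have hinj : ∀ j ∈ Fl, ∀ j' ∈ Fl, D j = D j' → j = j' := by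
      intro j hj j' hj' hDe
      rw [hFl, Finset.mem_filter] at hj hj'
      funext i
      have h1 := congrFun hDe i
      simp only [hD] at h1
      have := hj.2 i; have := hj'.2 i
      omega
    have himg : ∑ j ∈ Fl, g (D j) = ∑ d ∈ Fl.image D, g d :=
      (Finset.sum_image hinj).symm
    have hsub : Fl.image D ⊆ Finset.Nat.antidiagonalTuple n k := by
      intro d hd
      rw [Finset.mem_image] at hd
      obtain ⟨j, hj, rfl⟩ := hd
      rw [hFl, Finset.mem_filter, Finset.Nat.mem_antidiagonalTuple] at hj
      rw [Finset.Nat.mem_antidiagonalTuple]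
      have : ∑ i, (L i - j i) = (∑ i, L i) - (∑ i, j i) :=
        Finset.sum_tsub_distrib Finset.univ (fun i _ => hj.2 i)
      rw [hD]
      simp only []
      rw [this, hsum, hj.1]
      omega
    calc ∑ j ∈ Fl, g (D j) = ∑ d ∈ Fl.image D, g d := himg
      _ ≤ ∑ d ∈ Finset.Nat.antidiagonalTuple n k, g d :=
          Finset.sum_le_sum_of_subset_of_nonneg hsub (fun d _ _ => hgnn d)
      _ = (∑ i, x i)^k / (k ! : ℝ) := by rw [hg]; exact sum_prod_div_fact n k x hxnn
      _ ≤ ((l:ℝ) * ((l:ℝ)+1))^k / (k ! : ℝ) := by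
          have h1 : (0:ℝ) ≤ ∑ i, x i := Finset.sum_nonneg fun i _ => hxnn i
          have h2 : (∑ i, x i)^k ≤ ((l:ℝ) * ((l:ℝ)+1))^k := pow_le_pow_left₀ h1 hXr k
          gcongr

  have hfactpos : (0:ℝ) < (l ! : ℝ) := by positivity
  have hkfactpos : (0:ℝ) < (k ! : ℝ) := by positivity
  calc ((2 ^ (Nat.choose (l - k) 2) *
        ∑ j ∈ Fl, Nat.multinomial Finset.univ j * ∏ i, Nat.choose (L i + 2) (j i + 2) : ℕ) : ℝ)
      = (2:ℝ) ^ (Nat.choose (l - k) 2) *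
        ∑ j ∈ Fl, ((Nat.multinomial Finset.univ j *
          ∏ i, Nat.choose (L i + 2) (j i + 2) : ℕ) : ℝ) := by
        rw [Nat.cast_mul, Nat.cast_sum, Nat.cast_pow, Nat.cast_ofNat]
    _ ≤ (2:ℝ) ^ (Nat.choose (l - k) 2) *
        ∑ j ∈ Fl, ((Nat.multinomial Finset.univ L : ℝ) * (((l-k)! : ℝ) / (l ! : ℝ)) * g (D j)) := by
        apply mul_le_mul_of_nonneg_left _ (by positivity)
        apply Finset.sum_le_sum
        intro j hj
        exact hterm j hj
    _ = (2:ℝ) ^ (Nat.choose (l - k) 2) * ((Nat.multinomial Finset.univ L : ℝ) *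
          (((l-k)! : ℝ) / (l ! : ℝ))) * ∑ j ∈ Fl, g (D j) := by
        rw [← Finset.mul_sum]; ring
    _ ≤ (2:ℝ) ^ (Nat.choose (l - k) 2) * ((Nat.multinomial Finset.univ L : ℝ) *
          (((l-k)! : ℝ) / (l ! : ℝ))) * (((l:ℝ) * ((l:ℝ)+1))^k / (k ! : ℝ)) := by
        apply mul_le_mul_of_nonneg_left hsum_g (by positivity)
    _ = (Nat.multinomial Finset.univ L : ℝ) * F l k := by
        rw [F]; field_simp

lemma exp2_lt_8 : Real.exp 2 < 8 := by
  have h := Real.exp_one_lt_d9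
  have : Real.exp 2 = Real.exp 1 * Real.exp 1 := by
    rw [← Real.exp_add]; norm_num
  rw [this]
  nlinarith [Real.exp_pos 1]

lemma pow_m2 (m : ℕ) (hm : 1 ≤ m) : ((m:ℝ)+2)^m ≤ 8 * (m:ℝ)^m := by
  have hm0 : (0:ℝ) < m := by exact_mod_cast hm
  have h1 : (m:ℝ) + 2 ≤ (m:ℝ) * Real.exp (2 / m) := by
    have := Real.add_one_le_exp (2 / (m:ℝ))
    have h2 : (m:ℝ) * (2/(m:ℝ) + 1) ≤ (m:ℝ) * Real.exp (2/(m:ℝ)) :=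
      mul_le_mul_of_nonneg_left this (le_of_lt hm0)
    calc (m:ℝ) + 2 = (m:ℝ) * (2/(m:ℝ) + 1) := by field_simp; ring
      _ ≤ _ := h2
  calc ((m:ℝ)+2)^m ≤ ((m:ℝ) * Real.exp (2/m))^m := by
        apply pow_le_pow_left₀ (by positivity) h1
    _ = (m:ℝ)^m * Real.exp (2/m)^m := mul_pow _ _ _
    _ = (m:ℝ)^m * Real.exp 2 := by
        rw [← Real.exp_nat_mul]
        congr 1
        field_simp
    _ ≤ (m:ℝ)^m * 8 := by
        apply mul_le_mul_of_nonneg_left (le_of_lt exp2_lt_8) (by positivity)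
    _ = 8 * (m:ℝ)^m := by ring

-- tau: ∀ m ≥ 6, ((m:ℝ)*(m+1))^m * 10 ≤ 9 * 2^(choose m 2) * (m! * m!)
lemma tau (m : ℕ) (hm : 6 ≤ m) :
    ((m:ℝ)*((m:ℝ)+1))^m * 10 ≤ 9 * 2^(Nat.choose m 2) * ((m ! : ℝ) * (m ! : ℝ)) := by
  induction m, hm using Nat.le_induction with
  | base => norm_num [Nat.factorial, Nat.choose]
  | succ m hm ih =>
    have hch : Nat.choose (m+1) 2 = m + Nat.choose m 2 := by
      rw [Nat.choose_succ_succ]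
      simp [Nat.choose_one_right]
    have hm0 : (0:ℝ) < m := by positivity
    have key : (((m:ℝ)+1)*((m:ℝ)+2))^(m+1) * 10 ≤
        (2:ℝ)^m * ((m:ℝ)+1)^2 * (((m:ℝ)*((m:ℝ)+1))^m * 10) := by
      have e1 : (((m:ℝ)+1)*((m:ℝ)+2))^(m+1) = ((m:ℝ)+1)^(m+1) * (((m:ℝ)+2)^m * ((m:ℝ)+2)) := by
        rw [mul_pow]; ring
      have h2 : ((m:ℝ)+2)^m ≤ 8 * (m:ℝ)^m := pow_m2 m (by omega)
      have h3 : ((m:ℝ)+2) ≤ 2*((m:ℝ)+1) := by linarith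
      have h4 : ((m:ℝ)+2)^m * ((m:ℝ)+2) ≤ (8 * (m:ℝ)^m) * (2*((m:ℝ)+1)) := by
        apply mul_le_mul h2 h3 (by positivity) (by positivity)
      have h5 : (16:ℝ) ≤ 2^m := by
        calc (16:ℝ) = 2^4 := by norm_num
          _ ≤ 2^m := by apply pow_le_pow_right₀ (by norm_num) (by omega)
      calc (((m:ℝ)+1)*((m:ℝ)+2))^(m+1) * 10
          = ((m:ℝ)+1)^(m+1) * (((m:ℝ)+2)^m * ((m:ℝ)+2)) * 10 := by rw [e1]
        _ ≤ ((m:ℝ)+1)^(m+1) * ((8 * (m:ℝ)^m) * (2*((m:ℝ)+1))) * 10 := by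
            apply mul_le_mul_of_nonneg_right _ (by norm_num)
            exact mul_le_mul_of_nonneg_left h4 (by positivity)
        _ = 16 * (((m:ℝ)+1)^2 * (((m:ℝ)*((m:ℝ)+1))^m * 10)) := by
            rw [mul_pow]; ring
        _ ≤ (2:ℝ)^m * (((m:ℝ)+1)^2 * (((m:ℝ)*((m:ℝ)+1))^m * 10)) := by
            apply mul_le_mul_of_nonneg_right h5 (by positivity)
        _ = (2:ℝ)^m * ((m:ℝ)+1)^2 * (((m:ℝ)*((m:ℝ)+1))^m * 10) := by ring
    calc ((((m+1):ℕ):ℝ)*((((m+1):ℕ):ℝ)+1))^(m+1) * 10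
        = (((m:ℝ)+1)*((m:ℝ)+2))^(m+1) * 10 := by push_cast; ring_nf
      _ ≤ (2:ℝ)^m * ((m:ℝ)+1)^2 * (((m:ℝ)*((m:ℝ)+1))^m * 10) := key
      _ ≤ (2:ℝ)^m * ((m:ℝ)+1)^2 * (9 * 2^(Nat.choose m 2) * ((m ! : ℝ) * (m ! : ℝ))) := by
          apply mul_le_mul_of_nonneg_left ih (by positivity)
      _ = 9 * 2^(Nat.choose (m+1) 2) * (((m+1)! : ℝ) * ((m+1)! : ℝ)) := by
          rw [hch, pow_add, Nat.factorial_succ]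
          push_cast
          ring

lemma Fnonneg (l k : ℕ) : 0 ≤ F l k := by rw [F]; positivity

lemma Fstep (l k : ℕ) (hk1 : 1 ≤ k) (hkl : k ≤ l) (hl : 5 ≤ l) :
    F (l+1) k ≤ 7/10 * 2^l * F l k := by
  set m := l - k with hm
  have h1 : l + 1 - k = m + 1 := by omega
  have h2 : l = k + m := by omega
  have hl0 : (0:ℝ) < l := by positivity
  have e : F (l+1) k = F l k *
      ((2:ℝ)^m * ((m:ℝ)+1) * (((l:ℝ)+2)^k / ((l:ℝ)^k * ((l:ℝ)+1)))) := by
    simp only [F, h1, ← hm]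
    have hch : Nat.choose (m+1) 2 = m + Nat.choose m 2 := by
      rw [Nat.choose_succ_succ]; simp [Nat.choose_one_right]
    have hf1 : (((m+1):ℕ)! : ℝ) = ((m:ℝ)+1) * (m ! : ℝ) := by
      rw [Nat.factorial_succ]; push_cast; ring
    have hf2 : (((l+1):ℕ)! : ℝ) = ((l:ℝ)+1) * (l ! : ℝ) := by
      rw [Nat.factorial_succ]; push_cast; ring
    rw [hch, hf1, hf2, pow_add]
    have c1 : ((l:ℝ)+1) * ((l:ℝ)+1+1) = ((l:ℝ)+1)*((l:ℝ)+2) := by ring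
    push_cast
    rw [mul_pow ((l:ℝ)+1) ((l:ℝ)+1+1), mul_pow (l:ℝ) ((l:ℝ)+1)]
    have hlne : (l:ℝ) ≠ 0 := ne_of_gt hl0
    have hl1ne : ((l:ℝ)+1) ≠ 0 := by positivity
    have hfne : (l ! : ℝ) ≠ 0 := by positivity
    have hkne : (k ! : ℝ) ≠ 0 := by positivity
    field_simp
    ring
  rw [e]
  have hcore : ((l:ℝ)+2)^k * 10 ≤ 7 * (2*(l:ℝ))^k := by
    have h5 : (5:ℝ) ≤ l := by exact_mod_cast hl
    have ha : (l:ℝ)+2 ≤ 7/10 * (2*(l:ℝ)) := by linarith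
    have hb : ((l:ℝ)+2)^k ≤ (7/10 * (2*(l:ℝ)))^k := pow_le_pow_left₀ (by positivity) ha k
    have hc : (7/10 * (2*(l:ℝ)))^k = (7/10:ℝ)^k * (2*(l:ℝ))^k := mul_pow _ _ _
    have hd : ((7/10:ℝ))^k ≤ 7/10 := by
      calc ((7/10:ℝ))^k ≤ (7/10:ℝ)^1 := pow_le_pow_of_le_one (by norm_num) (by norm_num) hk1
        _ = 7/10 := pow_one _
    have he : (0:ℝ) ≤ (2*(l:ℝ))^k := by positivity
    nlinarith [hb, mul_le_mul_of_nonneg_right hd he]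
  have hb : (2:ℝ)^m * ((m:ℝ)+1) * (((l:ℝ)+2)^k / ((l:ℝ)^k * ((l:ℝ)+1))) ≤ 7/10 * 2^l := by
    rw [mul_div_assoc', div_le_iff₀ (by positivity)]
    have hmle : ((m:ℝ)+1) ≤ ((l:ℝ)+1) := by
      have : m ≤ l := by omega
      have : (m:ℝ) ≤ l := by exact_mod_cast this
      linarith
    calc (2:ℝ)^m * ((m:ℝ)+1) * ((l:ℝ)+2)^k
        ≤ (2:ℝ)^m * ((l:ℝ)+1) * ((l:ℝ)+2)^k := by
          apply mul_le_mul_of_nonneg_right _ (by positivity)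
          exact mul_le_mul_of_nonneg_left hmle (by positivity)
      _ ≤ (2:ℝ)^m * ((l:ℝ)+1) * (7/10 * (2*(l:ℝ))^k) := by
          apply mul_le_mul_of_nonneg_left _ (by positivity)
          linarith
      _ = 7/10 * 2^l * ((l:ℝ)^k * ((l:ℝ)+1)) := by
          rw [h2, pow_add, mul_pow]
          ring
  calc F l k * ((2:ℝ)^m * ((m:ℝ)+1) * (((l:ℝ)+2)^k / ((l:ℝ)^k * ((l:ℝ)+1))))
      ≤ F l k * (7/10 * 2^l) := mul_le_mul_of_nonneg_left hb (Fnonneg l k)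
    _ = 7/10 * 2^l * F l k := by ring

lemma Ftop (m : ℕ) (hm : 6 ≤ m) : F m m ≤ 9/10 * 2^(Nat.choose m 2) := by
  have h := tau m hm
  rw [F]
  rw [Nat.sub_self]
  simp only [Nat.choose, Nat.factorial, pow_zero, Nat.cast_one, one_mul]
  rw [div_le_iff₀ (by positivity)]
  norm_num
  nlinarith [h]

lemma keysum (l : ℕ) (hl : 5 ≤ l) :
    ∑ k ∈ Finset.Icc 1 l, F l k ≤ 3 * 2^(Nat.choose l 2) := by
  induction l, hl using Nat.le_induction with
  | base =>
    have hicc : Finset.Icc 1 5 = {1,2,3,4,5} := by decide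
    rw [hicc]
    norm_num [F, Nat.factorial, Nat.choose]
  | succ l hl ih =>
    rw [Finset.sum_Icc_succ_top (by omega : 1 ≤ l+1)]
    have h1 : ∑ k ∈ Finset.Icc 1 l, F (l+1) k ≤ 7/10 * 2^l * ∑ k ∈ Finset.Icc 1 l, F l k := by
      rw [Finset.mul_sum]
      apply Finset.sum_le_sum
      intro k hk
      rw [Finset.mem_Icc] at hk
      exact Fstep l k hk.1 hk.2 hl
    have h2 : F (l+1) (l+1) ≤ 9/10 * 2^(Nat.choose (l+1) 2) := Ftop (l+1) (by omega)
    have hch : Nat.choose (l+1) 2 = l + Nat.choose l 2 := by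
      rw [Nat.choose_succ_succ]; simp [Nat.choose_one_right]
    have h3 : 7/10 * 2^l * ∑ k ∈ Finset.Icc 1 l, F l k ≤ 7/10 * 2^l * (3 * 2^(Nat.choose l 2)) :=
      mul_le_mul_of_nonneg_left ih (by positivity)
    calc (∑ k ∈ Finset.Icc 1 l, F (l+1) k) + F (l+1) (l+1)
        ≤ 7/10 * 2^l * (3 * 2^(Nat.choose l 2)) + 9/10 * 2^(Nat.choose (l+1) 2) := by
          have := h1.trans h3
          linarith
      _ = 3 * 2^(Nat.choose (l+1) 2) := by
          rw [hch, pow_add]; ring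

theorem stmt_8 (n : ℕ) (hn : 2 ≤ n) (l : ℕ) (L : Fin n → ℕ)
    (hL : ∀ i, 0 < L i) (hsum : ∑ i, L i = l) (hl : 5 ≤ l)
    (a : ℕ → ℕ)
    (ha : ∀ k, a k = 2 ^ (Nat.choose (l - k) 2) *
      ∑ j ∈ (Finset.Nat.antidiagonalTuple n (l - k)).filter (fun j => ∀ i, j i ≤ L i),
        Nat.multinomial Finset.univ j * ∏ i, Nat.choose (L i + 2) (j i + 2)) :
    (∑ k ∈ Finset.Icc 1 l, (a k : ℝ)) <
      (Real.exp 2 - 1) / 2 * 2 ^ (Nat.choose l 2) * (Nat.multinomial Finset.univ L : ℝ) := by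
  have hmult1 : 1 ≤ (Nat.multinomial Finset.univ L : ℝ) := by
    exact_mod_cast Nat.succ_le_of_lt (Nat.multinomial_pos _ _)
  have hstep : ∑ k ∈ Finset.Icc 1 l, (a k : ℝ) ≤
      (Nat.multinomial Finset.univ L : ℝ) * ∑ k ∈ Finset.Icc 1 l, F l k := by
    rw [Finset.mul_sum]
    apply Finset.sum_le_sum
    intro k hk
    rw [Finset.mem_Icc] at hk
    rw [ha k]
    exact_mod_cast per_k n l k hn L hL hsum hk.2
  have h2 := keysum l hl
  have h3 : (3:ℝ) < (Real.exp 2 - 1)/2 := by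
    have hexp : (2.7182818283:ℝ) < Real.exp 1 := Real.exp_one_gt_d9
    have he2 : Real.exp 2 = Real.exp 1 * Real.exp 1 := by
      rw [← Real.exp_add]; norm_num
    nlinarith [hexp, he2]
  have hpow : (0:ℝ) < 2 ^ (Nat.choose l 2) := by positivity
  calc ∑ k ∈ Finset.Icc 1 l, (a k : ℝ)
      ≤ (Nat.multinomial Finset.univ L : ℝ) * ∑ k ∈ Finset.Icc 1 l, F l k := hstep
    _ ≤ (Nat.multinomial Finset.univ L : ℝ) * (3 * 2^(Nat.choose l 2)) :=
        mul_le_mul_of_nonneg_left h2 (by linarith)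
    _ < (Nat.multinomial Finset.univ L : ℝ) * ((Real.exp 2 - 1)/2 * 2^(Nat.choose l 2)) := by
        apply mul_lt_mul_of_pos_left _ (by linarith)
        apply mul_lt_mul_of_pos_right h3 hpow
    _ = (Real.exp 2 - 1) / 2 * 2 ^ (Nat.choose l 2) * (Nat.multinomial Finset.univ L : ℝ) := by
        ring
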